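/- Let p_1 < p_2 < ... be the primes. For every n ≥ 0, the limit as real s → ∞ of (ζ(s) - Q_n(s))^{-1/s} equals p_{n+1}, where Q_n(s) = ∏_{k=1}^{n}(1 - p_k^{-s})^{-1} and Q_0 = 1. -/

import Mathlib

open Filter Topology

noncomputable def realZeta (s : ℝ) : ℝ := ∑' n : ℕ, ((n : ℝ) + 1) ^ (-s)

noncomputable def nthPrime (k : ℕ) : ℕ := Nat.nth Nat.Prime k

noncomputable def Qpartial (n : ℕ) (s : ℝ) : ℝ :=
  ∏ k ∈ Finset.range n, (1 - ((nthPrime k : ℝ)) ^ (-s))⁻¹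

-- auxiliary
noncomputable def fpow (s : ℝ) : ℕ →* ℝ where
  toFun m := (m : ℝ) ^ (-s)
  map_one' := by simp
  map_mul' m n := by
    push_cast
    exact Real.mul_rpow (Nat.cast_nonneg m) (Nat.cast_nonneg n)

lemma fpow_apply (s : ℝ) (m : ℕ) : fpow s m = (m : ℝ) ^ (-s) := rfl

lemma summable_fpow {s : ℝ} (hs : 1 < s) : Summable (fun m : ℕ => (m : ℝ) ^ (-s)) :=
  Real.summable_nat_rpow.mpr (by linarith)

lemma realZeta_eq {s : ℝ} (hs : 1 < s) : realZeta s = ∑' m : ℕ, (m : ℝ) ^ (-s) := by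
  rw [Summable.tsum_eq_zero_add (summable_fpow hs)]
  rw [Nat.cast_zero, Real.zero_rpow (neg_ne_zero.mpr (by linarith) : -s ≠ 0), zero_add, realZeta]
  congr 1 with m
  push_cast
  ring_nf

lemma primesBelow_nth (n : ℕ) :
    (nthPrime n).primesBelow = (Finset.range n).image nthPrime := by
  ext p
  simp only [Nat.mem_primesBelow, Finset.mem_image, Finset.mem_range, nthPrime]
  constructor
  · rintro ⟨hlt, hp⟩
    refine ⟨Nat.count Nat.Prime p, ?_, Nat.nth_count hp⟩
    by_contra h
    push_neg at h
    have h2 := (Nat.nth_le_nth Nat.infinite_setOf_prime).mpr h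
    rw [Nat.nth_count hp] at h2
    exact absurd hlt (not_lt.mpr h2)
  · rintro ⟨k, hk, rfl⟩
    exact ⟨(Nat.nth_lt_nth Nat.infinite_setOf_prime).mpr hk,
      Nat.nth_mem_of_infinite Nat.infinite_setOf_prime k⟩

lemma Qpartial_eq {s : ℝ} (hs : 1 < s) (n : ℕ) :
    Qpartial n s = ∑' m : (nthPrime n).smoothNumbers, ((m : ℕ) : ℝ) ^ (-s) := by
  have h := EulerProduct.prod_primesBelow_geometric_eq_tsum_smoothNumbers
    (f := fpow s) (summable_fpow hs) (nthPrime n)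
  simp only [fpow_apply] at h
  rw [← h, primesBelow_nth, Finset.prod_image]
  · rfl
  · intro a _ b _ hab
    exact (Nat.nth_injective Nat.infinite_setOf_prime) hab

lemma diff_eq {s : ℝ} (hs : 1 < s) (n : ℕ) :
    realZeta s - Qpartial n s
      = ∑' m : ((nthPrime n).smoothNumbers ᶜ : Set ℕ), ((m : ℕ) : ℝ) ^ (-s) := by
  have hsum := summable_fpow hs
  have h1 : Summable (fun m : (nthPrime n).smoothNumbers => ((m : ℕ) : ℝ) ^ (-s)) :=
    hsum.subtype _
  have h2 : Summable (fun m : ((nthPrime n).smoothNumbers ᶜ : Set ℕ) => ((m : ℕ) : ℝ) ^ (-s)) :=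
    hsum.subtype _
  have h3 := Summable.tsum_add_tsum_compl (f := fun m : ℕ => (m : ℝ) ^ (-s)) h1 h2
  rw [realZeta_eq hs, Qpartial_eq hs n, ← h3]
  ring

lemma N_le_of_not_smooth {N m : ℕ} (hm : m ∉ N.smoothNumbers) (h0 : m ≠ 0) : N ≤ m := by
  rw [Nat.mem_smoothNumbers] at hm
  push_neg at hm
  obtain ⟨p, hp, hpN⟩ := hm h0
  exact hpN.trans (Nat.le_of_dvd (Nat.pos_of_ne_zero h0)
    (Nat.dvd_of_mem_primeFactorsList hp))

theorem stmt2 (n : ℕ) :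
    Tendsto (fun s : ℝ => (realZeta s - Qpartial n s) ^ (-1 / s)) atTop
      (𝓝 (nthPrime n : ℝ)) := by
  set N := nthPrime n with hNdef
  have hNp : N.Prime := Nat.nth_mem_of_infinite Nat.infinite_setOf_prime n
  have hN2 : 2 ≤ N := hNp.two_le
  have hN0 : (0:ℝ) < N := by exact_mod_cast hNp.pos
  have hN1 : (1:ℝ) ≤ N := by exact_mod_cast hNp.one_lt.le
  set C : ℝ := ∑' m : ℕ, (m : ℝ) ^ (-(2:ℝ)) with hCdef
  have hsum2 : Summable (fun m : ℕ => (m : ℝ) ^ (-(2:ℝ))) := summable_fpow one_lt_two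
  have hC1 : (1:ℝ) ≤ C := by
    have := Summable.le_tsum hsum2 1 (fun m _ => Real.rpow_nonneg (Nat.cast_nonneg m) _)
    simpa [hCdef] using this
  set K : ℝ := (N:ℝ) ^ (2:ℝ) * C with hKdef
  have hK1 : (1:ℝ) ≤ K := by
    have h1 : (1:ℝ) ≤ (N:ℝ) ^ (2:ℝ) := Real.one_le_rpow hN1 (by norm_num)
    rw [hKdef]
    have h2 := mul_le_mul h1 hC1 zero_le_one (le_trans zero_le_one h1)
    linarith
  have hK0 : (0:ℝ) < K := lt_of_lt_of_le one_pos hK1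
  -- compl sum of m^(-2) is at most C
  have hCcompl : ∑' m : ((N.smoothNumbers)ᶜ : Set ℕ), ((m:ℕ):ℝ) ^ (-(2:ℝ)) ≤ C := by
    have h1 : Summable (fun m : N.smoothNumbers => ((m : ℕ) : ℝ) ^ (-(2:ℝ))) :=
      hsum2.subtype _
    have h2 : Summable (fun m : ((N.smoothNumbers)ᶜ : Set ℕ) => ((m : ℕ) : ℝ) ^ (-(2:ℝ))) :=
      hsum2.subtype _
    have h3 := Summable.tsum_add_tsum_compl (f := fun m : ℕ => (m : ℝ) ^ (-(2:ℝ))) h1 h2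
    have h4 : (0:ℝ) ≤ ∑' m : N.smoothNumbers, ((m : ℕ) : ℝ) ^ (-(2:ℝ)) :=
      tsum_nonneg (fun m => Real.rpow_nonneg (Nat.cast_nonneg _) _)
    rw [hCdef, ← h3]
    linarith
  -- main bounds for s ≥ 2
  have key : ∀ s : ℝ, 2 ≤ s →
      (N:ℝ) ^ (-s) ≤ realZeta s - Qpartial n s ∧
        realZeta s - Qpartial n s ≤ K * (N:ℝ) ^ (-s) := by
    intro s hs2
    have hs1 : 1 < s := by linarith
    rw [diff_eq hs1 n]
    constructor
    · have hNmem : N ∈ (N.smoothNumbersᶜ : Set ℕ) := by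
        intro hmem
        rw [Nat.mem_smoothNumbers'] at hmem
        exact lt_irrefl N (hmem N hNp dvd_rfl)
      have := Summable.le_tsum ((summable_fpow hs1).subtype _) (⟨N, hNmem⟩ : (N.smoothNumbersᶜ : Set ℕ))
        (fun m _ => Real.rpow_nonneg (Nat.cast_nonneg _) _)
      exact this
    · have pointwise : ∀ m : ((N.smoothNumbers)ᶜ : Set ℕ),
          ((m:ℕ):ℝ) ^ (-s) ≤ (N:ℝ) ^ (2 - s) * ((m:ℕ):ℝ) ^ (-(2:ℝ)) := by
        rintro ⟨m, hm⟩
        rcases eq_or_ne m 0 with rfl | h0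
        · simp [Real.zero_rpow (neg_ne_zero.mpr (by linarith : s ≠ 0)),
            Real.zero_rpow (by norm_num : (-(2:ℝ)) ≠ 0)]
        · have hNm : N ≤ m := N_le_of_not_smooth hm h0
          have hm0 : (0:ℝ) < m := by exact_mod_cast Nat.pos_of_ne_zero h0
          have hsplit : ((m:ℕ):ℝ) ^ (-s) = (m:ℝ) ^ (2 - s) * (m:ℝ) ^ (-(2:ℝ)) := by
            rw [← Real.rpow_add hm0]
            ring_nf
          rw [hsplit]
          have hbase : (m:ℝ) ^ (2 - s) ≤ (N:ℝ) ^ (2 - s) :=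
            Real.rpow_le_rpow_of_nonpos hN0 (by exact_mod_cast hNm) (by linarith)
          exact mul_le_mul_of_nonneg_right hbase (Real.rpow_nonneg hm0.le _)
      have h2' : Summable (fun m : ((N.smoothNumbers)ᶜ : Set ℕ) => ((m : ℕ) : ℝ) ^ (-(2:ℝ))) :=
        hsum2.subtype _
      calc ∑' m : ((N.smoothNumbers)ᶜ : Set ℕ), ((m:ℕ):ℝ) ^ (-s)
          ≤ ∑' m : ((N.smoothNumbers)ᶜ : Set ℕ), (N:ℝ) ^ (2 - s) * ((m:ℕ):ℝ) ^ (-(2:ℝ)) :=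
            Summable.tsum_le_tsum pointwise ((summable_fpow hs1).subtype _) (h2'.mul_left _)
        _ = (N:ℝ) ^ (2 - s) * ∑' m : ((N.smoothNumbers)ᶜ : Set ℕ), ((m:ℕ):ℝ) ^ (-(2:ℝ)) :=
            tsum_mul_left
        _ ≤ (N:ℝ) ^ (2 - s) * C := by
            exact mul_le_mul_of_nonneg_left hCcompl (Real.rpow_nonneg hN0.le _)
        _ = K * (N:ℝ) ^ (-s) := by
            rw [hKdef, sub_eq_add_neg, Real.rpow_add hN0]
            ring
  -- squeeze
  have hupper : ∀ᶠ s : ℝ in atTop,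
      (realZeta s - Qpartial n s) ^ (-1 / s) ≤ (N:ℝ) := by
    filter_upwards [eventually_ge_atTop (2:ℝ)] with s hs2
    obtain ⟨hlo, _⟩ := key s hs2
    have hs0 : s ≠ 0 := by linarith
    have hpos : (0:ℝ) < (N:ℝ) ^ (-s) := Real.rpow_pos_of_pos hN0 _
    have hneg : -1/s ≤ 0 := by
      rw [neg_div]
      exact neg_nonpos.mpr (by positivity)
    have h := Real.rpow_le_rpow_of_nonpos hpos hlo hneg
    rw [← Real.rpow_mul hN0.le, neg_mul, neg_div, mul_neg, neg_neg,
      mul_one_div, div_self hs0, Real.rpow_one] at h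
    rw [neg_div]
    exact h
  have hlower : ∀ᶠ s : ℝ in atTop,
      K ^ (-1/s) * (N:ℝ) ≤ (realZeta s - Qpartial n s) ^ (-1 / s) := by
    filter_upwards [eventually_ge_atTop (2:ℝ)] with s hs2
    obtain ⟨hlo, hhi⟩ := key s hs2
    have hs0 : s ≠ 0 := by linarith
    have hneg : -1/s ≤ 0 := by
      rw [neg_div]
      exact neg_nonpos.mpr (by positivity)
    have hdpos : (0:ℝ) < realZeta s - Qpartial n s :=
      lt_of_lt_of_le (Real.rpow_pos_of_pos hN0 _) hlo
    have h := Real.rpow_le_rpow_of_nonpos hdpos hhi hneg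
    calc K ^ (-1/s) * (N:ℝ)
        = (K * (N:ℝ) ^ (-s)) ^ (-1/s) := by
          rw [Real.mul_rpow hK0.le (Real.rpow_pos_of_pos hN0 _).le,
            ← Real.rpow_mul hN0.le, neg_mul, neg_div, mul_neg, neg_neg,
            mul_one_div, div_self hs0, Real.rpow_one]
      _ ≤ (realZeta s - Qpartial n s) ^ (-1/s) := h
  have hK_tendsto : Tendsto (fun s : ℝ => K ^ (-1/s) * (N:ℝ)) atTop (𝓝 (N:ℝ)) := by
    have h1 : Tendsto (fun s : ℝ => -1/s) atTop (𝓝 0) := by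
      have := tendsto_inv_atTop_zero (𝕜 := ℝ)
      have h2 := this.neg
      rw [neg_zero] at h2
      simpa [neg_div, one_div] using h2
    have h3 : Tendsto (fun s : ℝ => K ^ (-1/s)) atTop (𝓝 1) := by
      have := Filter.Tendsto.comp (Real.continuousAt_const_rpow (by linarith : K ≠ 0)) h1
      simpa [Real.rpow_zero, Function.comp_def] using this
    have h4 := h3.mul_const (N:ℝ)
    rwa [one_mul] at h4
  exact tendsto_of_tendsto_of_tendsto_of_le_of_le' hK_tendsto tendsto_const_nhds hlower hupper
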